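/- If an abstract rewriting system equipped with a labelling of its steps in a well-founded order is decreasing (every local branching (f, g) from a common source can be completed by a confluence whose first legs use only labels strictly below the label of f, respectively g, followed by at most one step with the same label, followed by steps with labels strictly below one of the two), then the system is confluent. -/

import Mathlib

/-- Reduction using only steps whose label lies in the set `S`. -/
def UnionRel {α W : Type*} (rel : W → α → α → Prop) (S : Set W) (a b : α) : Prop :=
  ∃ k ∈ S, rel k a b

/-- Van Oostrom's decreasing-diagram condition for a labelled abstract rewriting
system: every local branching `a → b` (label `k`), `a → c` (label `l`) can be
completed as `b →*_{≺k} b₁ →^=_{l} b₂ →*_{≺k ∨ ≺l} d` and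
`c →*_{≺l} c₁ →^=_{k} c₂ →*_{≺k ∨ ≺l} d`. -/
def Decreasing {α W : Type*} (rel : W → α → α → Prop) (prec : W → W → Prop) : Prop :=
  ∀ k l a b c, rel k a b → rel l a c →
    ∃ b₁ b₂ c₁ c₂ d,
      Relation.ReflTransGen (UnionRel rel {j | prec j k}) b b₁ ∧
      (b₂ = b₁ ∨ rel l b₁ b₂) ∧
      Relation.ReflTransGen (UnionRel rel {j | prec j k ∨ prec j l}) b₂ d ∧
      Relation.ReflTransGen (UnionRel rel {j | prec j l}) c c₁ ∧
      (c₂ = c₁ ∨ rel k c₁ c₂) ∧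
      Relation.ReflTransGen (UnionRel rel {j | prec j k ∨ prec j l}) c₂ d


namespace VanOostromDD

variable {α W : Type*}

/-- `Multiset.filter` with a fixed classical decidability instance. -/
noncomputable def mfil (p : W → Prop) (s : Multiset W) : Multiset W :=
  @Multiset.filter W p (fun a => Classical.propDecidable (p a)) s

theorem filter_inst {p : W → Prop} (i : DecidablePred p) (s : Multiset W) :
    @Multiset.filter W p i s = mfil p s := by
  unfold mfil
  congr 1

theorem mfil_add (p : W → Prop) (s t : Multiset W) :
    mfil p (s + t) = mfil p s + mfil p t :=
  @Multiset.filter_add W p (fun a => Classical.propDecidable (p a)) s t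

theorem mfil_le (p : W → Prop) (s : Multiset W) : mfil p s ≤ s :=
  @Multiset.filter_le W p (fun a => Classical.propDecidable (p a)) s

theorem mfil_le_mfil (p : W → Prop) {s t : Multiset W} (h : s ≤ t) :
    mfil p s ≤ mfil p t :=
  @Multiset.filter_le_filter W p (fun a => Classical.propDecidable (p a)) s t h

theorem mem_mfil {p : W → Prop} {a : W} {s : Multiset W} :
    a ∈ mfil p s ↔ a ∈ s ∧ p a :=
  @Multiset.mem_filter W p (fun a => Classical.propDecidable (p a)) a s

theorem mfil_cons_pos {p : W → Prop} {a : W} (s : Multiset W) (h : p a) :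
    mfil p (a ::ₘ s) = a ::ₘ mfil p s :=
  @Multiset.filter_cons_of_pos W p (fun a => Classical.propDecidable (p a)) a s h

theorem mfil_cons_neg {p : W → Prop} {a : W} (s : Multiset W) (h : ¬ p a) :
    mfil p (a ::ₘ s) = mfil p s :=
  @Multiset.filter_cons_of_neg W p (fun a => Classical.propDecidable (p a)) a s h

theorem mfil_mfil (p q : W → Prop) (s : Multiset W) :
    mfil p (mfil q s) = mfil (fun a => p a ∧ q a) s := by
  have h := @Multiset.filter_filter W p (fun a => Classical.propDecidable (p a)) q
    (fun a => Classical.propDecidable (q a)) s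
  simp only [filter_inst] at h
  exact h

theorem mfil_congr {p q : W → Prop} {s : Multiset W} (h : ∀ a ∈ s, p a ↔ q a) :
    mfil p s = mfil q s :=
  @Multiset.filter_congr W p q (fun a => Classical.propDecidable (p a))
    (fun a => Classical.propDecidable (q a)) s h

theorem mfil_eq_nil {p : W → Prop} {s : Multiset W} :
    mfil p s = 0 ↔ ∀ a ∈ s, ¬ p a :=
  @Multiset.filter_eq_nil W p (fun a => Classical.propDecidable (p a)) s

theorem mfil_eq_self {p : W → Prop} {s : Multiset W} :
    mfil p s = s ↔ ∀ a ∈ s, p a :=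
  @Multiset.filter_eq_self W p (fun a => Classical.propDecidable (p a)) s

theorem mfil_add_not (p : W → Prop) (s : Multiset W) :
    mfil p s + mfil (fun a => ¬ p a) s = s := by
  have h := @Multiset.filter_add_not W p (fun a => Classical.propDecidable (p a)) s
  simp only [filter_inst] at h
  exact h

theorem mfil_zero (p : W → Prop) : mfil p (0 : Multiset W) = 0 := rfl

theorem mfil_singleton_pos {p : W → Prop} {a : W} (h : p a) :
    mfil p ({a} : Multiset W) = {a} := by
  have := mfil_cons_pos (p := p) (a := a) (0 : Multiset W) h
  simpa [mfil_zero] using this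

theorem mfil_singleton_neg {p : W → Prop} {a : W} (h : ¬ p a) :
    mfil p ({a} : Multiset W) = 0 := by
  have := mfil_cons_neg (p := p) (a := a) (0 : Multiset W) h
  simpa [mfil_zero] using this

theorem mfil_le_mfil_of_imp {p q : W → Prop} (s : Multiset W)
    (h : ∀ a ∈ s, q a → p a) : mfil q s ≤ mfil p s := by
  have h1 : mfil q s = mfil p (mfil q s) := by
    rw [eq_comm, mfil_eq_self]
    intro a ha
    exact h a (Multiset.mem_of_le (mfil_le _ _) ha) (mem_mfil.mp ha).2
  rw [h1]
  exact mfil_le_mfil p (mfil_le _ _)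

end VanOostromDD

namespace VanOostromDD


variable {W : Type*}

/-- One step of the multiset order: remove one element `x`, add a multiset of
elements all strictly below `x`. -/
def MRed (prec : W → W → Prop) (N M : Multiset W) : Prop :=
  ∃ Z x Y, M = x ::ₘ Z ∧ N = Z + Y ∧ ∀ y ∈ Y, prec y x

/-- Reflexive-transitive closure of `MRed`. -/
def MLE (prec : W → W → Prop) : Multiset W → Multiset W → Prop :=
  Relation.ReflTransGen (MRed prec)

/-- Transitive closure of `MRed`. -/
def MLT (prec : W → W → Prop) : Multiset W → Multiset W → Prop :=
  Relation.TransGen (MRed prec)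

variable {prec : W → W → Prop}

theorem MLE.refl {M : Multiset W} : MLE prec M M := Relation.ReflTransGen.refl

theorem MLE.trans {A B C : Multiset W} (h1 : MLE prec A B) (h2 : MLE prec B C) :
    MLE prec A C := Relation.ReflTransGen.trans h1 h2

theorem MLT.to_mle {A B : Multiset W} (h : MLT prec A B) : MLE prec A B :=
  Relation.TransGen.to_reflTransGen h

theorem MLE.trans_mlt {A B C : Multiset W} (h1 : MLE prec A B) (h2 : MLT prec B C) :
    MLT prec A C := Relation.TransGen.trans_right h1 h2

theorem MLT.trans_mle {A B C : Multiset W} (h1 : MLT prec A B) (h2 : MLE prec B C) :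
    MLT prec A C := Relation.TransGen.trans_left h1 h2

/-- Well-foundedness of `MRed` (Buchholz/Nipkow style proof). -/
theorem mred_wf (hwf : WellFounded prec) : WellFounded (MRed prec) := by
  have acc0 : Acc (MRed prec) 0 := by
    constructor
    rintro N ⟨Z, x, Y, h0, -, -⟩
    exact absurd h0.symm (Multiset.cons_ne_zero)
  have key : ∀ x : W, ∀ {M : Multiset W}, Acc (MRed prec) M → Acc (MRed prec) (x ::ₘ M) := by
    intro x
    induction x using hwf.induction with
    | _ x ihx =>
      intro M hM
      induction hM with
      | intro M hMacc ihM =>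
        constructor
        intro N hN
        obtain ⟨Z, x', Y, hcons, hNeq, hY⟩ := hN
        rcases Multiset.cons_eq_cons.mp hcons with ⟨heq, rfl⟩ | ⟨hne, u, hMu, hZu⟩
        · -- removed the head x
          subst heq
          subst hNeq
          have hacc : ∀ Y' : Multiset W, (∀ y ∈ Y', prec y x) → Acc (MRed prec) (M + Y') := by
            intro Y'
            induction Y' using Multiset.induction with
            | empty => intro _; simpa using Acc.intro M hMacc
            | cons y Y' ih =>
              intro hsub
              have : M + y ::ₘ Y' = y ::ₘ (M + Y') := by
                rw [Multiset.add_cons]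
              rw [this]
              exact ihx y (hsub y (Multiset.mem_cons_self _ _))
                (ih (fun z hz => hsub z (Multiset.mem_cons_of_mem hz)))
          exact hacc Y hY
        · -- removed an element of M
          subst hMu
          have hstep : MRed prec (u + Y) (x' ::ₘ u) := ⟨u, x', Y, rfl, rfl, hY⟩
          have := ihM (u + Y) hstep
          have hNeq' : N = x ::ₘ (u + Y) := by
            rw [hNeq, hZu, Multiset.cons_add]
          rw [hNeq']
          exact this
  constructor
  intro M
  induction M using Multiset.induction with
  | empty => exact acc0
  | cons x M ih => exact key x ih

theorem mlt_wf (hwf : WellFounded prec) : WellFounded (MLT prec) :=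
  (mred_wf hwf).transGen

theorem mred_add_left (C : Multiset W) {N M : Multiset W} (h : MRed prec N M) :
    MRed prec (C + N) (C + M) := by
  obtain ⟨Z, x, Y, hM, hN, hY⟩ := h
  exact ⟨C + Z, x, Y, by rw [hM, Multiset.add_cons], by rw [hN, add_assoc], hY⟩

theorem MLE.add_left (C : Multiset W) {N M : Multiset W} (h : MLE prec N M) :
    MLE prec (C + N) (C + M) :=
  Relation.ReflTransGen.lift (fun s => C + s) (fun _ _ h => mred_add_left C h) _ _ h

theorem MLE.add_right (C : Multiset W) {N M : Multiset W} (h : MLE prec N M) :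
    MLE prec (N + C) (M + C) := by
  rw [add_comm N C, add_comm M C]; exact h.add_left C

theorem MLE.add {N₁ N₂ M₁ M₂ : Multiset W} (h1 : MLE prec N₁ M₁) (h2 : MLE prec N₂ M₂) :
    MLE prec (N₁ + N₂) (M₁ + M₂) :=
  (h1.add_right N₂).trans (h2.add_left M₁)

theorem mle_of_le {N M : Multiset W} (h : N ≤ M) : MLE prec N M := by
  obtain ⟨D, rfl⟩ := Multiset.le_iff_exists_add.mp h
  clear h
  induction D using Multiset.induction with
  | empty => simpa using MLE.refl
  | cons x D ih =>
    have : N + x ::ₘ D = x ::ₘ (N + D) := Multiset.add_cons x N D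
    rw [this]
    exact ih.tail ⟨N + D, x, 0, rfl, (add_zero _).symm, by simp⟩

/-- A "Dershowitz–Manna step": remove a nonempty multiset `X`, add a multiset `Y`
each of whose elements is strictly below some element of `X`. -/
theorem mlt_of_dm {Z X Y : Multiset W} (hX : X ≠ 0)
    (hY : ∀ y ∈ Y, ∃ x ∈ X, prec y x) : MLT prec (Z + Y) (Z + X) := by
  classical
  induction X using Multiset.strongInductionOn generalizing Z Y with
  | _ X ihX =>
    obtain ⟨x, hx⟩ := Multiset.exists_mem_of_ne_zero hX
    have hXe : x ::ₘ X.erase x = X := Multiset.cons_erase hx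
    set X' := X.erase x with hX'def
    set Y₁ := mfil (fun y => prec y x) Y with hY₁
    set Y₂ := mfil (fun y => ¬ prec y x) Y with hY₂
    have hYsplit : Y₁ + Y₂ = Y := mfil_add_not _ Y
    have hY₂dom : ∀ y ∈ Y₂, ∃ x' ∈ X', prec y x' := by
      intro y hy
      have hy2 := mem_mfil.mp hy
      obtain ⟨x'', hx'', hyx''⟩ := hY y hy2.1
      have hne : x'' ≠ x := fun h => hy2.2 (h ▸ hyx'')
      exact ⟨x'', (Multiset.mem_erase_of_ne hne).mpr hx'', hyx''⟩
    by_cases hX0 : X' = 0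
    · -- X = {x}
      have hY₂0 : Y₂ = 0 := by
        apply Multiset.eq_zero_of_forall_notMem
        intro y hy
        obtain ⟨x', hx', -⟩ := hY₂dom y hy
        rw [hX0] at hx'
        exact absurd hx' (Multiset.notMem_zero _)
      have hYY : Y = Y₁ := by rw [← hYsplit, hY₂0, add_zero]
      have hstep : MRed prec (Z + Y) (Z + X) := by
        refine ⟨Z, x, Y, ?_, rfl, ?_⟩
        · rw [← hXe, hX0, Multiset.add_cons, add_zero]
        · intro y hy
          rw [hYY] at hy
          exact (mem_mfil.mp hy).2
      exact Relation.TransGen.single hstep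
    · have hlt : X' < X := by rw [hX'def]; exact Multiset.erase_lt.mpr hx
      have h1 : MLT prec ((Z + Y₁) + Y₂) ((Z + Y₁) + X') := ihX X' hlt hX0 hY₂dom
      have hstep : MRed prec ((Z + Y₁) + X') (Z + X) := by
        refine ⟨Z + X', x, Y₁, ?_, ?_, ?_⟩
        · rw [← hXe, Multiset.add_cons]
        · abel
        · intro y hy; exact (mem_mfil.mp hy).2
      have h2 : MLT prec ((Z + Y₁) + Y₂) (Z + X) := Relation.TransGen.tail h1 hstep
      have : Z + Y = (Z + Y₁) + Y₂ := by rw [add_assoc, hYsplit]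
      rw [this]
      exact h2

theorem mlt_of_le_dm {N M Z X Y : Multiset W} (hN : N ≤ Z + Y) (hM : M = Z + X)
    (hX : X ≠ 0) (hY : ∀ y ∈ Y, ∃ x ∈ X, prec y x) : MLT prec N M := by
  subst hM
  exact (mle_of_le hN).trans_mlt (mlt_of_dm hX hY)

theorem mle_zero {N : Multiset W} (h : MLE prec N 0) : N = 0 := by
  induction h using Relation.ReflTransGen.head_induction_on with
  | refl => rfl
  | head h' _ ih =>
    obtain ⟨Z, x, Y, h0, -, -⟩ := (ih ▸ h' : MRed prec _ 0)
    exact absurd h0.symm Multiset.cons_ne_zero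

theorem mle_singleton (htr : Transitive prec) {N : Multiset W} {l : W}
    (h : MLE prec N {l}) : N = {l} ∨ ∀ j ∈ N, prec j l := by
  induction h using Relation.ReflTransGen.head_induction_on with
  | refl => exact Or.inl rfl
  | head h' _ ih =>
    rename_i A C
    obtain ⟨Z, x, Y, hC, hA, hY⟩ := h'
    rcases ih with hC1 | hC2
    · subst hC1
      have : l = x ∧ Z = 0 := by
        have : (l ::ₘ 0 : Multiset W) = x ::ₘ Z := by simpa using hC
        rcases Multiset.cons_eq_cons.mp this with ⟨h1, h2⟩ | ⟨-, u, h0, -⟩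
        · exact ⟨h1, h2.symm⟩
        · exact absurd h0.symm Multiset.cons_ne_zero
      obtain ⟨rfl, rfl⟩ := this
      right
      intro j hj
      rw [hA, zero_add] at hj
      exact hY j hj
    · right
      intro j hj
      rw [hA] at hj
      rcases Multiset.mem_add.mp hj with hj | hj
      · exact hC2 j (hC ▸ Multiset.mem_cons_of_mem hj)
      · have hx : prec x l := hC2 x (hC ▸ Multiset.mem_cons_self _ _)
        exact htr (hY j hj) hx

theorem mle_decomp {N M₁ M₂ : Multiset W} (h : MLE prec N (M₁ + M₂)) :
    ∃ N₁ N₂, N = N₁ + N₂ ∧ MLE prec N₁ M₁ ∧ MLE prec N₂ M₂ := by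
  induction h using Relation.ReflTransGen.head_induction_on with
  | refl => exact ⟨M₁, M₂, rfl, MLE.refl, MLE.refl⟩
  | head h' _ ih =>
    rename_i A C
    obtain ⟨C₁, C₂, rfl, hC₁, hC₂⟩ := ih
    obtain ⟨Z, x, Y, hC, hA, hY⟩ := h'
    have hxmem : x ∈ C₁ + C₂ := hC ▸ Multiset.mem_cons_self _ _
    rcases Multiset.mem_add.mp hxmem with hx | hx
    · obtain ⟨C₁', rfl⟩ := Multiset.exists_cons_of_mem hx
      have hZ : Z = C₁' + C₂ := by
        have : x ::ₘ (C₁' + C₂) = x ::ₘ Z := by rw [← hC, Multiset.cons_add]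
        exact (Multiset.cons_inj_right x).mp this.symm
      refine ⟨C₁' + Y, C₂, ?_, ?_, hC₂⟩
      · rw [hA, hZ]; abel
      · exact hC₁.head ⟨C₁', x, Y, rfl, rfl, hY⟩
    · obtain ⟨C₂', rfl⟩ := Multiset.exists_cons_of_mem hx
      have hZ : Z = C₁ + C₂' := by
        have : x ::ₘ (C₁ + C₂') = x ::ₘ Z := by rw [← hC, Multiset.add_cons]
        exact (Multiset.cons_inj_right x).mp this.symm
      refine ⟨C₁, C₂' + Y, ?_, hC₁, ?_⟩
      · rw [hA, hZ]; abel
      · exact hC₂.head ⟨C₂', x, Y, rfl, rfl, hY⟩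

theorem mle_elem (htr : Transitive prec) {N M : Multiset W} (h : MLE prec N M) :
    ∀ j ∈ N, j ∈ M ∨ ∃ x ∈ M, prec j x := by
  induction h using Relation.ReflTransGen.head_induction_on with
  | refl => exact fun j hj => Or.inl hj
  | head h' _ ih =>
    rename_i A C
    obtain ⟨Z, x, Y, hC, hA, hY⟩ := h'
    intro j hj
    rw [hA] at hj
    rcases Multiset.mem_add.mp hj with hj | hj
    · exact ih j (hC ▸ Multiset.mem_cons_of_mem hj)
    · have hx := ih x (hC ▸ Multiset.mem_cons_self _ _)
      rcases hx with hx | ⟨m, hm, hxm⟩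
      · exact Or.inr ⟨x, hx, hY j hj⟩
      · exact Or.inr ⟨m, hm, htr (hY j hj) hxm⟩

/-- Upward-closed predicates along `prec`. -/
def Good (prec : W → W → Prop) (p : W → Prop) : Prop :=
  ∀ ⦃j x⦄, prec j x → p j → p x

theorem mle_mfil {p : W → Prop} (hp : Good prec p) {N M : Multiset W}
    (h : MLE prec N M) : MLE prec (mfil p N) (mfil p M) := by
  induction h with
  | refl => exact MLE.refl
  | tail _ hstep ih =>
    rename_i B C _
    obtain ⟨Z, x, Y, hC, hB, hY⟩ := hstep
    by_cases hpx : p x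
    · refine ih.tail ⟨mfil p Z, x, mfil p Y, ?_, ?_, ?_⟩
      · rw [hC, mfil_cons_pos _ hpx]
      · rw [hB, mfil_add]
      · intro y hy; exact hY y (mem_mfil.mp hy).1
    · have hYf : mfil p Y = 0 := by
        rw [mfil_eq_nil]
        intro y hy hpy
        exact hpx (hp (hY y hy) hpy)
      have : mfil p C = mfil p B := by
        rw [hC, hB, mfil_cons_neg _ hpx, mfil_add, hYf, add_zero]
      rw [← this] at ih
      exact ih

variable {α W : Type*}

/-- `j` is not strictly below any element of the list `σ`. -/
def nBA (prec : W → W → Prop) (σ : List W) (j : W) : Prop :=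
  ∀ x ∈ σ, ¬ prec j x

/-- van Oostrom's measure of a string of labels. -/
noncomputable def meas (prec : W → W → Prop) : List W → Multiset W
  | [] => 0
  | k :: σ => k ::ₘ mfil (fun j => ¬ prec j k) (meas prec σ)

variable {prec : W → W → Prop}

theorem good_nBA (htr : Transitive prec) (σ : List W) : Good prec (nBA prec σ) := by
  intro j x hjx hj s hs hxs
  exact hj s hs (htr hjx hxs)

theorem good_notlt (htr : Transitive prec) (k : W) :
    Good prec (fun j => ¬ prec j k) := by
  intro j x hjx hj hxk
  exact hj (htr hjx hxk)

theorem good_and {p q : W → Prop} (hp : Good prec p) (hq : Good prec q) :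
    Good prec (fun j => p j ∧ q j) := fun _ _ h hj => ⟨hp h hj.1, hq h hj.2⟩

theorem nBA_nil (j : W) : nBA prec [] j := by intro x hx; cases hx

theorem nBA_cons {k : W} {σ : List W} {j : W} :
    nBA prec (k :: σ) j ↔ ¬ prec j k ∧ nBA prec σ j := by
  constructor
  · intro h; exact ⟨h k (List.mem_cons_self), fun x hx => h x (List.mem_cons_of_mem _ hx)⟩
  · rintro ⟨h1, h2⟩ x hx
    rcases List.mem_cons.mp hx with rfl | hx
    · exact h1
    · exact h2 x hx

theorem meas_nil : meas prec [] = 0 := rfl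

theorem meas_cons (k : W) (σ : List W) :
    meas prec (k :: σ) = k ::ₘ mfil (fun j => ¬ prec j k) (meas prec σ) := rfl

theorem meas_append (σ τ : List W) :
    meas prec (σ ++ τ) = meas prec σ + mfil (nBA prec σ) (meas prec τ) := by
  induction σ with
  | nil =>
    simp only [List.nil_append, meas_nil, zero_add]
    rw [eq_comm, mfil_eq_self]
    intro a _
    exact nBA_nil a
  | cons k σ ih =>
    simp only [List.cons_append, meas_cons, ih, mfil_add, Multiset.cons_add]
    rw [mfil_mfil]
    have he : mfil (fun a => ¬ prec a k ∧ nBA prec σ a) (meas prec τ)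
        = mfil (nBA prec (k :: σ)) (meas prec τ) := by
      apply mfil_congr
      intro j _
      constructor
      · rintro ⟨h1, h2⟩; exact nBA_cons.mpr ⟨h1, h2⟩
      · intro h; exact nBA_cons.mp h
    rw [he]

theorem meas_le_coe (σ : List W) : meas prec σ ≤ (σ : Multiset W) := by
  induction σ with
  | nil => simp [meas_nil]
  | cons k σ ih =>
    rw [meas_cons, ← Multiset.cons_coe]
    exact Multiset.cons_le_cons k ((mfil_le _ _).trans ih)

theorem mem_of_mem_meas {σ : List W} {j : W} (h : j ∈ meas prec σ) : j ∈ σ := by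
  have := Multiset.mem_of_le (meas_le_coe σ) h
  exact Multiset.mem_coe.mp this

theorem meas_dominates (htr : Transitive prec) {σ : List W} {j : W} (h : j ∈ σ) :
    j ∈ meas prec σ ∨ ∃ x ∈ meas prec σ, prec j x := by
  induction σ with
  | nil => cases h
  | cons k σ ih =>
    rcases List.mem_cons.mp h with rfl | h
    · exact Or.inl (Multiset.mem_cons_self _ _)
    · rcases ih h with hm | ⟨x, hx, hjx⟩
      · by_cases hjk : prec j k
        · exact Or.inr ⟨k, Multiset.mem_cons_self _ _, hjk⟩
        · exact Or.inl (Multiset.mem_cons_of_mem (mem_mfil.mpr ⟨hm, hjk⟩))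
      · by_cases hxk : prec x k
        · exact Or.inr ⟨k, Multiset.mem_cons_self _ _, htr hjx hxk⟩
        · exact Or.inr ⟨x, Multiset.mem_cons_of_mem (mem_mfil.mpr ⟨hx, hxk⟩), hjx⟩

/-- The shape of one leg of a decreasing diagram for a `(k, l)` peak. -/
def Shape (prec : W → W → Prop) (k l : W) (δ : List W) : Prop :=
  ∃ δa δb δc : List W, δ = δa ++ (δb ++ δc) ∧ (∀ j ∈ δa, prec j k) ∧
    (δb = [] ∨ δb = [l]) ∧ ∀ j ∈ δc, prec j k ∨ prec j l

theorem shape_elem {k l : W} {δ : List W} (h : Shape prec k l δ) :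
    ∀ x ∈ δ, prec x k ∨ x = l ∨ prec x l := by
  obtain ⟨δa, δb, δc, rfl, ha, hb, hc⟩ := h
  intro x hx
  rcases List.mem_append.mp hx with hx | hx
  · exact Or.inl (ha x hx)
  rcases List.mem_append.mp hx with hx | hx
  · rcases hb with rfl | rfl
    · cases hx
    · rcases List.mem_singleton.mp hx with rfl
      exact Or.inr (Or.inl rfl)
  · rcases hc x hx with h | h
    · exact Or.inl h
    · exact Or.inr (Or.inr h)

theorem shape_filter {k l : W} {δ : List W} {p : W → Prop}
    (hpk : ∀ j, prec j k → ¬ p j) (hδ : Shape prec k l δ) :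
    mfil p (meas prec δ) ≤ mfil p {l} ∨
      ∀ j ∈ mfil p (meas prec δ), prec j l := by
  obtain ⟨δa, δb, δc, rfl, ha, hb, hc⟩ := hδ
  rcases hb with rfl | rfl
  · right
    intro j hj
    obtain ⟨hjm, hjp⟩ := mem_mfil.mp hj
    have hjδ := mem_of_mem_meas hjm
    rcases List.mem_append.mp hjδ with hx | hx
    · exact absurd hjp (hpk j (ha j hx))
    rcases List.mem_append.mp hx with hx | hx
    · cases hx
    · rcases hc j hx with h | h
      · exact absurd hjp (hpk j h)
      · exact h
  · left
    rw [meas_append]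
    have h2 : meas prec ([l] ++ δc) = l ::ₘ mfil (fun j => ¬ prec j l) (meas prec δc) := rfl
    rw [h2, mfil_add]
    have e1 : mfil p (meas prec δa) = 0 := by
      rw [mfil_eq_nil]
      intro j hj
      exact hpk j (ha j (mem_of_mem_meas hj))
    rw [e1, zero_add]
    have hle1 : mfil p (mfil (nBA prec δa)
        (l ::ₘ mfil (fun j => ¬ prec j l) (meas prec δc)))
        ≤ mfil p (l ::ₘ mfil (fun j => ¬ prec j l) (meas prec δc)) := by
      rw [mfil_mfil]
      apply mfil_le_mfil_of_imp
      intro a _ h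
      exact h.1
    refine hle1.trans ?_
    by_cases hpl : p l
    · rw [mfil_cons_pos _ hpl, mfil_singleton_pos hpl]
      have e2 : mfil p (mfil (fun j => ¬ prec j l) (meas prec δc)) = 0 := by
        rw [mfil_mfil, mfil_eq_nil]
        intro j hj hconj
        rcases hc j (mem_of_mem_meas hj) with h | h
        · exact hpk j h hconj.1
        · exact hconj.2 h
      rw [e2]
      simp
    · rw [mfil_cons_neg _ hpl, mfil_singleton_neg hpl]
      have e2 : mfil p (mfil (fun j => ¬ prec j l) (meas prec δc)) = 0 := by
        rw [mfil_mfil, mfil_eq_nil]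
        intro j hj hconj
        rcases hc j (mem_of_mem_meas hj) with h | h
        · exact hpk j h hconj.1
        · exact hconj.2 h
      rw [e2]

/-- Labelled reduction sequences. -/
inductive Seq (rel : W → α → α → Prop) : α → List W → α → Prop
  | nil (a : α) : Seq rel a [] a
  | cons {a b c : α} {k : W} {σ : List W} (h : rel k a b) (hs : Seq rel b σ c) :
      Seq rel a (k :: σ) c

theorem Seq.append {rel : W → α → α → Prop} {a b c : α} {σ τ : List W}
    (h1 : Seq rel a σ b) (h2 : Seq rel b τ c) : Seq rel a (σ ++ τ) c := by
  induction h1 with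
  | nil => exact h2
  | cons h _ ih => exact Seq.cons h (ih h2)

theorem seq_of_unionRel {rel : W → α → α → Prop} {S : Set W} {x y : α}
    (h : Relation.ReflTransGen (UnionRel rel S) x y) :
    ∃ σ, Seq rel x σ y ∧ ∀ j ∈ σ, j ∈ S := by
  induction h with
  | refl => exact ⟨[], Seq.nil x, by simp⟩
  | tail _ hstep ih =>
    obtain ⟨σ, hσ, hS⟩ := ih
    obtain ⟨k, hk, hrel⟩ := hstep
    refine ⟨σ ++ [k], hσ.append (Seq.cons hrel (Seq.nil _)), ?_⟩
    intro j hj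
    rcases List.mem_append.mp hj with hj | hj
    · exact hS j hj
    · rcases List.mem_singleton.mp hj with rfl; exact hk

theorem seq_of_rtg {rel : W → α → α → Prop} {x y : α}
    (h : Relation.ReflTransGen (fun x y => ∃ k, rel k x y) x y) :
    ∃ σ : List W, Seq rel x σ y := by
  induction h with
  | refl => exact ⟨[], Seq.nil x⟩
  | tail _ hstep ih =>
    obtain ⟨σ, hσ⟩ := ih
    obtain ⟨k, hrel⟩ := hstep
    exact ⟨σ ++ [k], hσ.append (Seq.cons hrel (Seq.nil _))⟩

theorem rtg_of_seq {rel : W → α → α → Prop} {x y : α} {σ : List W}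
    (h : Seq rel x σ y) :
    Relation.ReflTransGen (fun x y => ∃ k, rel k x y) x y := by
  induction h with
  | nil => exact Relation.ReflTransGen.refl
  | cons h _ ih => exact Relation.ReflTransGen.head ⟨_, h⟩ ih

theorem cons_eq_singleton_add (a : W) (s : Multiset W) : a ::ₘ s = {a} + s :=
  (Multiset.singleton_add a s).symm

/-- Strict decrease for the "wing" peaks `(σ₁, δ)`. -/
theorem peakA_lt (htr : Transitive prec) {k l : W} {δ : List W}
    (hδ : Shape prec k l δ) (σ₁ τ₁ : List W) :
    MLT prec (meas prec σ₁ + meas prec δ)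
      (meas prec (k :: σ₁) + meas prec (l :: τ₁)) := by
  set S := mfil (fun j => ¬ prec j k) (meas prec σ₁) with hSdef
  set R := mfil (fun j => ¬¬ prec j k) (meas prec σ₁) with hRdef
  have hSR : S + R = meas prec σ₁ := mfil_add_not _ _
  have hR : ∀ j ∈ R, prec j k := fun j hj => not_not.mp (mem_mfil.mp hj).2
  set T := mfil (fun j => ¬ prec j l) (meas prec τ₁) with hTdef
  set U := mfil (fun j => ¬ prec j k) (meas prec δ) with hUdef
  set V := mfil (fun j => ¬¬ prec j k) (meas prec δ) with hVdef
  have hUV : U + V = meas prec δ := mfil_add_not _ _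
  have hV : ∀ j ∈ V, prec j k := fun j hj => not_not.mp (mem_mfil.mp hj).2
  have hM1 : meas prec (k :: σ₁) = k ::ₘ S := rfl
  have hM2 : meas prec (l :: τ₁) = l ::ₘ T := rfl
  have hpk : ∀ j, prec j k → ¬ (fun j => ¬ prec j k) j := fun j h hn => hn h
  rcases shape_filter (prec := prec) hpk hδ with hU | hU
  · -- U ≤ filter _ {l} ≤ {l}
    rw [← hUdef] at hU
    have hUle : U ≤ {l} := hU.trans (mfil_le _ _)
    have hN : meas prec σ₁ + meas prec δ ≤ (S + {l}) + (R + V) := by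
      rw [← hSR, ← hUV]
      calc S + R + (U + V) = (S + R + V) + U := by abel
        _ ≤ (S + R + V) + {l} := add_le_add le_rfl hUle
        _ = (S + {l}) + (R + V) := by abel
    have hM : meas prec (k :: σ₁) + meas prec (l :: τ₁) = (S + {l}) + (k ::ₘ T) := by
      rw [hM1, hM2]
      simp only [cons_eq_singleton_add]
      abel
    refine mlt_of_le_dm hN hM (Multiset.cons_ne_zero) ?_
    intro y hy
    rcases Multiset.mem_add.mp hy with hy | hy
    · exact ⟨k, Multiset.mem_cons_self _ _, hR y hy⟩
    · exact ⟨k, Multiset.mem_cons_self _ _, hV y hy⟩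
  · -- all elements of U are below l
    rw [← hUdef] at hU
    have hN : meas prec σ₁ + meas prec δ ≤ S + (R + V + U) := by
      rw [← hSR, ← hUV]
      exact le_of_eq (by abel)
    have hM : meas prec (k :: σ₁) + meas prec (l :: τ₁) = S + (k ::ₘ (l ::ₘ T)) := by
      rw [hM1, hM2]
      simp only [cons_eq_singleton_add]
      abel
    refine mlt_of_le_dm hN hM (Multiset.cons_ne_zero) ?_
    intro y hy
    rcases Multiset.mem_add.mp hy with hy | hy
    rcases Multiset.mem_add.mp hy with hy | hy
    · exact ⟨k, Multiset.mem_cons_self _ _, hR y hy⟩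
    · exact ⟨k, Multiset.mem_cons_self _ _, hV y hy⟩
    · exact ⟨l, Multiset.mem_cons_of_mem (Multiset.mem_cons_self _ _), hU y hy⟩

/-- Elements appearing in the completion `δ'` of the peak `(σ₁, δ)`. -/
theorem delta'_elem (htr : Transitive prec) {k l : W} {σ₁ δ δ' : List W}
    (hδ : Shape prec k l δ)
    (h2A : MLE prec (mfil (nBA prec δ) (meas prec δ'))
      (mfil (nBA prec δ) (meas prec σ₁))) :
    ∀ x ∈ δ', (∃ s ∈ σ₁, x = s ∨ prec x s) ∨ prec x k ∨ prec x l := by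
  have hz : ∀ z ∈ meas prec δ', (∃ s ∈ σ₁, z = s ∨ prec z s) ∨ prec z k ∨ prec z l := by
    intro z hzm
    by_cases hnz : nBA prec δ z
    · have hzf : z ∈ mfil (nBA prec δ) (meas prec δ') :=
        mem_mfil.mpr ⟨hzm, hnz⟩
      have hmle : MLE prec (mfil (nBA prec δ) (meas prec δ')) (meas prec σ₁) :=
        h2A.trans (mle_of_le (mfil_le _ _))
      rcases mle_elem htr hmle z hzf with hm | ⟨s, hs, hzs⟩
      · exact Or.inl ⟨z, mem_of_mem_meas hm, Or.inl rfl⟩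
      · exact Or.inl ⟨s, mem_of_mem_meas hs, Or.inr hzs⟩
    · have : ∃ x ∈ δ, prec z x := by
        by_contra hcon
        push_neg at hcon
        exact hnz fun x hx => hcon x hx
      obtain ⟨x, hx, hzx⟩ := this
      rcases shape_elem hδ x hx with h | rfl | h
      · exact Or.inr (Or.inl (htr hzx h))
      · exact Or.inr (Or.inr hzx)
      · exact Or.inr (Or.inr (htr hzx h))
  intro x hx
  rcases meas_dominates htr hx with hm | ⟨y, hy, hxy⟩
  · exact hz x hm
  · rcases hz y hy with ⟨s, hs, heq | hys⟩ | hk | hl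
    · exact Or.inl ⟨s, hs, Or.inr (heq ▸ hxy)⟩
    · exact Or.inl ⟨s, hs, Or.inr (htr hxy hys)⟩
    · exact Or.inr (Or.inl (htr hxy hk))
    · exact Or.inr (Or.inr (htr hxy hl))

/-- Strict decrease for the middle peak `(δ', γ')`. -/
theorem peakC_lt (htr : Transitive prec) {k l : W} {σ₁ τ₁ δ γ δ' γ' : List W}
    (hδ : Shape prec k l δ) (hγ : Shape prec l k γ)
    (h2A : MLE prec (mfil (nBA prec δ) (meas prec δ'))
      (mfil (nBA prec δ) (meas prec σ₁)))
    (h2B : MLE prec (mfil (nBA prec γ) (meas prec γ'))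
      (mfil (nBA prec γ) (meas prec τ₁))) :
    MLT prec (meas prec δ' + meas prec γ')
      (meas prec (k :: σ₁) + meas prec (l :: τ₁)) := by
  set Qδ := mfil (fun j => ¬ nBA prec δ j) (meas prec δ') with hQδdef
  set Qγ := mfil (fun j => ¬ nBA prec γ j) (meas prec γ') with hQγdef
  have hsplitδ : mfil (nBA prec δ) (meas prec δ') + Qδ = meas prec δ' :=
    mfil_add_not _ _
  have hsplitγ : mfil (nBA prec γ) (meas prec γ') + Qγ = meas prec γ' :=
    mfil_add_not _ _
  have hQδ : ∀ j ∈ Qδ, prec j k ∨ prec j l := by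
    intro j hj
    obtain ⟨-, hn⟩ := mem_mfil.mp hj
    have : ∃ x ∈ δ, prec j x := by
      by_contra hcon; push_neg at hcon; exact hn fun x hx => hcon x hx
    obtain ⟨x, hx, hjx⟩ := this
    rcases shape_elem hδ x hx with h | rfl | h
    · exact Or.inl (htr hjx h)
    · exact Or.inr hjx
    · exact Or.inr (htr hjx h)
  have hQγ : ∀ j ∈ Qγ, prec j l ∨ prec j k := by
    intro j hj
    obtain ⟨-, hn⟩ := mem_mfil.mp hj
    have : ∃ x ∈ γ, prec j x := by
      by_contra hcon; push_neg at hcon; exact hn fun x hx => hcon x hx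
    obtain ⟨x, hx, hjx⟩ := this
    rcases shape_elem hγ x hx with h | rfl | h
    · exact Or.inl (htr hjx h)
    · exact Or.inr hjx
    · exact Or.inr (htr hjx h)
  have hδ'le : MLE prec (meas prec δ') (meas prec σ₁ + Qδ) := by
    rw [← hsplitδ]
    exact (h2A.trans (mle_of_le (mfil_le _ _))).add_right Qδ
  have hγ'le : MLE prec (meas prec γ') (meas prec τ₁ + Qγ) := by
    rw [← hsplitγ]
    exact (h2B.trans (mle_of_le (mfil_le _ _))).add_right Qγ
  have hcomb : MLE prec (meas prec δ' + meas prec γ')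
      ((meas prec σ₁ + Qδ) + (meas prec τ₁ + Qγ)) := hδ'le.add hγ'le
  set S := mfil (fun j => ¬ prec j k) (meas prec σ₁) with hSdef
  set R := mfil (fun j => ¬¬ prec j k) (meas prec σ₁) with hRdef
  have hSR : S + R = meas prec σ₁ := mfil_add_not _ _
  have hR : ∀ j ∈ R, prec j k := fun j hj => not_not.mp (mem_mfil.mp hj).2
  set T := mfil (fun j => ¬ prec j l) (meas prec τ₁) with hTdef
  set R' := mfil (fun j => ¬¬ prec j l) (meas prec τ₁) with hR'def
  have hTR : T + R' = meas prec τ₁ := mfil_add_not _ _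
  have hR' : ∀ j ∈ R', prec j l := fun j hj => not_not.mp (mem_mfil.mp hj).2
  have hN : (meas prec σ₁ + Qδ) + (meas prec τ₁ + Qγ)
      ≤ (S + T) + (R + R' + Qδ + Qγ) := by
    rw [← hSR, ← hTR]
    exact le_of_eq (by abel)
  have hM : meas prec (k :: σ₁) + meas prec (l :: τ₁) = (S + T) + (k ::ₘ {l}) := by
    show (k ::ₘ S) + (l ::ₘ T) = _
    simp only [cons_eq_singleton_add]
    abel
  have hkX : k ∈ (k ::ₘ ({l} : Multiset W)) := Multiset.mem_cons_self _ _
  have hlX : l ∈ (k ::ₘ ({l} : Multiset W)) :=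
    Multiset.mem_cons_of_mem (Multiset.mem_singleton_self l)
  have hmlt : MLT prec ((meas prec σ₁ + Qδ) + (meas prec τ₁ + Qγ))
      (meas prec (k :: σ₁) + meas prec (l :: τ₁)) := by
    refine mlt_of_le_dm hN hM (Multiset.cons_ne_zero) ?_
    intro y hy
    rcases Multiset.mem_add.mp hy with hy | hy
    · rcases Multiset.mem_add.mp hy with hy | hy
      · rcases Multiset.mem_add.mp hy with hy | hy
        · exact ⟨k, hkX, hR y hy⟩
        · exact ⟨l, hlX, hR' y hy⟩
      · rcases hQδ y hy with h | h
        · exact ⟨k, hkX, h⟩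
        · exact ⟨l, hlX, h⟩
    · rcases hQγ y hy with h | h
      · exact ⟨l, hlX, h⟩
      · exact ⟨k, hkX, h⟩
  exact hcomb.trans_mlt hmlt



/-- The key composition step: the first invariant for the composed diagram. -/
theorem assemble (htr : Transitive prec)
    {k l : W} {σ₁ τ₁ δ γ σ'' ρ δ' : List W}
    (hδ : Shape prec k l δ) (hγ : Shape prec l k γ)
    (hW1A : MLE prec (mfil (nBA prec σ₁) (meas prec σ''))
      (mfil (nBA prec σ₁) (meas prec δ)))
    (hW2B : MLE prec (mfil (nBA prec γ) (meas prec γ'))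
      (mfil (nBA prec γ) (meas prec τ₁)))
    (hW1C : MLE prec (mfil (nBA prec δ') (meas prec ρ))
      (mfil (nBA prec δ') (meas prec γ')))
    (hδ'elem : ∀ x ∈ δ', (∃ s ∈ σ₁, x = s ∨ prec x s) ∨ prec x k ∨ prec x l) :
    MLE prec (mfil (nBA prec (k :: σ₁)) (meas prec (σ'' ++ ρ)))
      (mfil (nBA prec (k :: σ₁)) (meas prec (l :: τ₁))) := by
  set p := nBA prec (k :: σ₁) with hpdef
  have hgp : Good prec p := good_nBA htr _
  have hpk : ∀ j, prec j k → ¬ p j := fun j hj hp => hp k (List.mem_cons_self) hj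
  have hpσ₁ : ∀ j s, s ∈ σ₁ → prec j s → ¬ p j :=
    fun j s hs hjs hp => hp s (List.mem_cons_of_mem _ hs) hjs
  -- decompose the left-hand side
  set A := mfil p (meas prec σ'') with hAdef
  set q : W → Prop := fun j => p j ∧ nBA prec σ'' j with hqdef
  have hgq : Good prec q := good_and hgp (good_nBA htr _)
  set B := mfil q (meas prec ρ) with hBdef
  have hL : mfil p (meas prec (σ'' ++ ρ)) = A + B := by
    rw [meas_append, mfil_add, hAdef, hBdef, mfil_mfil]
  -- decompose the right-hand side
  set T₁ := mfil (fun j => p j ∧ ¬ prec j l) (meas prec τ₁) with hT₁def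
  have hR : mfil p (meas prec (l :: τ₁)) = mfil p {l} + T₁ := by
    rw [meas_cons, hT₁def, ← mfil_mfil]
    by_cases hpl : p l
    · rw [mfil_cons_pos _ hpl, mfil_singleton_pos hpl, Multiset.singleton_add]
    · rw [mfil_cons_neg _ hpl, mfil_singleton_neg hpl, zero_add]
  -- bound A
  have hfilt : ∀ X : Multiset W,
      mfil p X = mfil (fun j => ¬ prec j k) (mfil (nBA prec σ₁) X) := by
    intro X
    rw [mfil_mfil]
    apply mfil_congr
    intro j _
    constructor
    · intro h; exact ⟨(nBA_cons.mp h).1, (nBA_cons.mp h).2⟩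
    · intro h; exact nBA_cons.mpr h
  set Aδ := mfil p (meas prec δ) with hAδdef
  have hA : MLE prec A Aδ := by
    rw [hAdef, hAδdef, hfilt (meas prec σ''), hfilt (meas prec δ)]
    exact mle_mfil (good_notlt htr k) hW1A
  -- bound B
  have hρsplit : mfil (nBA prec δ') (meas prec ρ)
      + mfil (fun j => ¬ nBA prec δ' j) (meas prec ρ) = meas prec ρ :=
    mfil_add_not _ _
  set B₁ := mfil q (mfil (nBA prec δ') (meas prec ρ)) with hB₁def
  set B₂ := mfil q (mfil (fun j => ¬ nBA prec δ' j) (meas prec ρ)) with hB₂def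
  have hBsplit : B = B₁ + B₂ := by
    rw [hBdef, ← hρsplit, mfil_add]
  have hB₂ : ∀ j ∈ B₂, prec j l ∧ q j := by
    intro j hj
    obtain ⟨hj1, hqj⟩ := mem_mfil.mp hj
    obtain ⟨-, hn⟩ := mem_mfil.mp hj1
    have : ∃ x ∈ δ', prec j x := by
      by_contra hcon; push_neg at hcon; exact hn fun x hx => hcon x hx
    obtain ⟨x, hx, hjx⟩ := this
    rcases hδ'elem x hx with ⟨s, hs, heq | hlt⟩ | hk | hl
    · exact absurd hqj.1 (hpσ₁ j s hs (heq ▸ hjx))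
    · exact absurd hqj.1 (hpσ₁ j s hs (htr hjx hlt))
    · exact absurd hqj.1 (hpk j (htr hjx hk))
    · exact ⟨htr hjx hl, hqj⟩
  -- bound B₁ through the C-diagram
  set Q : W → Prop := fun j => q j ∧ nBA prec δ' j with hQdef
  have hgQ : Good prec Q := good_and hgq (good_nBA htr _)
  set C₁ := mfil Q (meas prec γ') with hC₁def
  have hB₁ : MLE prec B₁ C₁ := by
    have h3 : C₁ = mfil q (mfil (nBA prec δ') (meas prec γ')) := by
      rw [hC₁def, hQdef, ← mfil_mfil]
    rw [hB₁def, h3]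
    exact mle_mfil hgq hW1C
  -- split C₁
  have hγ'split : mfil (nBA prec γ) (meas prec γ')
      + mfil (fun j => ¬ nBA prec γ j) (meas prec γ') = meas prec γ' :=
    mfil_add_not _ _
  set C₁a := mfil Q (mfil (nBA prec γ) (meas prec γ')) with hC₁adef
  set C₁b := mfil Q (mfil (fun j => ¬ nBA prec γ j) (meas prec γ')) with hC₁bdef
  have hC₁split : C₁ = C₁a + C₁b := by
    rw [hC₁def, ← hγ'split, mfil_add]
  set D := mfil Q (mfil (nBA prec γ) (meas prec τ₁)) with hDdef
  have hC₁a : MLE prec C₁a D := by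
    rw [hC₁adef, hDdef]
    exact mle_mfil hgQ hW2B
  set D₁ := mfil (fun j => ¬ prec j l) D with hD₁def
  set D₂ := mfil (fun j => ¬¬ prec j l) D with hD₂def
  have hDsplit : D₁ + D₂ = D := mfil_add_not _ _
  have hD₁T : D₁ ≤ T₁ := by
    rw [hD₁def, hT₁def, hDdef, hQdef, hqdef, mfil_mfil, mfil_mfil]
    apply mfil_le_mfil_of_imp
    intro a _ ha
    obtain ⟨⟨h1, ⟨⟨hpa, -⟩, -⟩⟩, -⟩ := ha
    exact ⟨hpa, h1⟩
  have hD₂ : ∀ j ∈ D₂, prec j l ∧ q j := by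
    intro j hj
    obtain ⟨hj1, hnn⟩ := mem_mfil.mp hj
    obtain ⟨-, hQj⟩ := mem_mfil.mp hj1
    exact ⟨not_not.mp hnn, hQj.1⟩
  have hC₁b : ∀ j ∈ C₁b, prec j l ∧ q j := by
    intro j hj
    obtain ⟨hj1, hQj⟩ := mem_mfil.mp hj
    obtain ⟨-, hn⟩ := mem_mfil.mp hj1
    have : ∃ x ∈ γ, prec j x := by
      by_contra hcon; push_neg at hcon; exact hn fun x hx => hcon x hx
    obtain ⟨x, hx, hjx⟩ := this
    rcases shape_elem hγ x hx with h | rfl | h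
    · exact ⟨htr hjx h, hQj.1⟩
    · exact absurd hQj.1.1 (hpk j hjx)
    · exact absurd hQj.1.1 (hpk j (htr hjx h))
  -- assemble the bound for B
  set J := D₂ + C₁b + B₂ with hJdef
  have hJ : ∀ j ∈ J, prec j l ∧ p j ∧ nBA prec σ'' j := by
    intro j hj
    rw [hJdef] at hj
    rcases Multiset.mem_add.mp hj with hj | hj
    · rcases Multiset.mem_add.mp hj with hj | hj
      · obtain ⟨h1, h2⟩ := hD₂ j hj; exact ⟨h1, h2⟩
      · obtain ⟨h1, h2⟩ := hC₁b j hj; exact ⟨h1, h2⟩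
    · obtain ⟨h1, h2⟩ := hB₂ j hj; exact ⟨h1, h2⟩
  have hB : MLE prec B (D₁ + J) := by
    rw [hBsplit, hJdef]
    have h1 : MLE prec B₁ (D₁ + D₂ + C₁b) := by
      refine (hB₁.trans ?_)
      rw [hC₁split]
      refine MLE.add ?_ MLE.refl
      exact (hC₁a.trans (mle_of_le (le_of_eq hDsplit.symm)))
    have h2 : MLE prec (B₁ + B₂) (D₁ + D₂ + C₁b + B₂) := h1.add_right B₂
    refine h2.trans (mle_of_le (le_of_eq (by abel)))
  -- now the case analysis
  rw [hL, hR]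
  by_cases hpl : p l
  · have hFl : mfil p {l} = {l} := mfil_singleton_pos hpl
    rw [hFl]
    obtain ⟨rest, hrest⟩ := Multiset.le_iff_exists_add.mp hD₁T
    rcases shape_filter (prec := prec) hpk hδ with hshape | hshape
    · -- Aδ ≤ {l}
      rw [← hAδdef, hFl] at hshape
      by_cases hlσ : l ∈ σ''
      · have hJ0 : J = 0 := by
          apply Multiset.eq_zero_of_forall_notMem
          intro j hj
          exact (hJ j hj).2.2 l hlσ (hJ j hj).1
        have h1 : MLE prec (A + B) (Aδ + (D₁ + J)) := hA.add hB
        refine h1.trans (mle_of_le ?_)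
        rw [hJ0, add_zero]
        exact add_le_add hshape hD₁T
      · have hlA : l ∉ A := by
          intro hmem
          have h1 : l ∈ meas prec σ'' := Multiset.mem_of_le (mfil_le _ _) hmem
          exact hlσ (mem_of_mem_meas h1)
        have hAle : MLE prec A ({l} : Multiset W) := hA.trans (mle_of_le hshape)
        have hAl : ∀ j ∈ A, prec j l := by
          rcases mle_singleton htr hAle with h | h
          · exact absurd (h ▸ Multiset.mem_singleton_self l) hlA
          · exact h
        have h1 : MLE prec (A + B) (A + (D₁ + J)) := hB.add_left A
        refine (h1.trans_mlt ?_).to_mle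
        refine mlt_of_le_dm (Z := D₁) (X := {l} + rest) (Y := A + J)
          (le_of_eq (by abel)) (by rw [hrest]; abel) ?_ ?_
        · intro h0
          have : (l : W) ∈ ({l} + rest : Multiset W) := Multiset.mem_add.mpr
            (Or.inl (Multiset.mem_singleton_self l))
          rw [h0] at this
          exact Multiset.notMem_zero _ this
        · intro y hy
          have hyl : prec y l := by
            rcases Multiset.mem_add.mp hy with hy | hy
            · exact hAl y hy
            · exact (hJ y hy).1
          exact ⟨l, Multiset.mem_add.mpr (Or.inl (Multiset.mem_singleton_self l)), hyl⟩
    · -- all elements of Aδ are below l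
      rw [← hAδdef] at hshape
      have h1 : MLE prec (A + B) (Aδ + (D₁ + J)) := hA.add hB
      refine (h1.trans_mlt ?_).to_mle
      refine mlt_of_le_dm (Z := D₁) (X := {l} + rest) (Y := Aδ + J)
        (le_of_eq (by abel)) (by rw [hrest]; abel) ?_ ?_
      · intro h0
        have : (l : W) ∈ ({l} + rest : Multiset W) := Multiset.mem_add.mpr
          (Or.inl (Multiset.mem_singleton_self l))
        rw [h0] at this
        exact Multiset.notMem_zero _ this
      · intro y hy
        have hyl : prec y l := by
          rcases Multiset.mem_add.mp hy with hy | hy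
          · exact hshape y hy
          · exact (hJ y hy).1
        exact ⟨l, Multiset.mem_add.mpr (Or.inl (Multiset.mem_singleton_self l)), hyl⟩
  · -- ¬ p l : everything below l must vanish
    have hFl : mfil p {l} = 0 := mfil_singleton_neg hpl
    have hJ0 : J = 0 := by
      apply Multiset.eq_zero_of_forall_notMem
      intro j hj
      exact hpl (hgp (hJ j hj).1 (hJ j hj).2.1)
    have hAδ0 : Aδ = 0 := by
      rcases shape_filter (prec := prec) hpk hδ with hshape | hshape
      · rw [← hAδdef, hFl] at hshape
        exact Multiset.le_zero.mp hshape
      · rw [← hAδdef] at hshape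
        apply Multiset.eq_zero_of_forall_notMem
        intro j hj
        have hpj : p j := (mem_mfil.mp (hAδdef ▸ hj)).2
        exact hpl (hgp (hshape j hj) hpj)
    have hA0 : A = 0 := mle_zero (hAδ0 ▸ hA)
    rw [hFl, hA0, zero_add, zero_add]
    refine hB.trans (mle_of_le ?_)
    rw [hJ0, add_zero]
    exact hD₁T


theorem main_lemma {rel : W → α → α → Prop} (htr : Transitive prec) (hwf : WellFounded prec)
    (hdec : ∀ (k l : W) (x y z : α), rel k x y → rel l x z →
      ∃ e δ γ, Seq rel y δ e ∧ Seq rel z γ e ∧ Shape prec k l δ ∧ Shape prec l k γ) :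
    ∀ (m : Multiset W) (a b c : α) (σ τ : List W), meas prec σ + meas prec τ = m →
      Seq rel a σ b → Seq rel a τ c →
      ∃ (d : α) (σ' τ' : List W), Seq rel b σ' d ∧ Seq rel c τ' d ∧
        MLE prec (mfil (nBA prec σ) (meas prec σ')) (mfil (nBA prec σ) (meas prec τ)) ∧
        MLE prec (mfil (nBA prec τ) (meas prec τ')) (mfil (nBA prec τ) (meas prec σ)) := by
  intro m
  induction m using (mlt_wf hwf).induction with
  | _ m IH =>
  intro a b c σ τ hm hσ hτ
  subst hm
  cases σ with
  | nil =>
    cases hσ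
    exact ⟨c, τ, [], hτ, Seq.nil c, MLE.refl, MLE.refl⟩
  | cons k σ₁ =>
    cases τ with
    | nil =>
      cases hτ
      exact ⟨b, [], k :: σ₁, Seq.nil b, hσ, MLE.refl, MLE.refl⟩
    | cons l τ₁ =>
      cases hσ with
      | cons hk hσ₁ =>
      cases hτ with
      | cons hl hτ₁ =>
      rename_i b₀ c₀
      obtain ⟨e, δ, γ, hδe, hγe, hshδ, hshγ⟩ := hdec k l a b₀ c₀ hk hl
      -- peak A : (σ₁, δ) at b₀
      have hltA := peakA_lt htr hshδ σ₁ τ₁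
      obtain ⟨f, σ'', δ', hbf, heδ', hW1A, hW2A⟩ :=
        IH _ hltA b₀ b e σ₁ δ rfl hσ₁ hδe
      -- peak B : (τ₁, γ) at c₀
      have hltB : MLT prec (meas prec τ₁ + meas prec γ)
          (meas prec (k :: σ₁) + meas prec (l :: τ₁)) := by
        have h := peakA_lt htr hshγ τ₁ σ₁
        rwa [add_comm (meas prec (l :: τ₁))] at h
      obtain ⟨g, τ'', γ', hcg, heγ', hW1B, hW2B⟩ :=
        IH _ hltB c₀ c e τ₁ γ rfl hτ₁ hγe
      -- peak C : (δ', γ') at e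
      have hltC := peakC_lt htr hshδ hshγ hW2A hW2B
      obtain ⟨h, ρ, π, hfρ, hgπ, hW1C, hW2C⟩ :=
        IH _ hltC e f g δ' γ' rfl heδ' heγ'
      refine ⟨h, σ'' ++ ρ, τ'' ++ π, hbf.append hfρ, hcg.append hgπ, ?_, ?_⟩
      · exact assemble htr hshδ hshγ hW1A hW2B hW1C (delta'_elem htr hshδ hW2A)
      · exact assemble htr hshγ hshδ hW1B hW2A hW2C (delta'_elem htr hshγ hW2B)

theorem confluent {rel : W → α → α → Prop}
    (prec : W → W → Prop) (hwf : WellFounded prec)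
    (hdec : Decreasing rel prec) :
    ∀ a b c, Relation.ReflTransGen (fun x y => ∃ k, rel k x y) a b →
      Relation.ReflTransGen (fun x y => ∃ k, rel k x y) a c →
      ∃ d, Relation.ReflTransGen (fun x y => ∃ k, rel k x y) b d ∧
        Relation.ReflTransGen (fun x y => ∃ k, rel k x y) c d := by
  intro a b c hab hac
  set P : W → W → Prop := Relation.TransGen prec with hPdef
  have htr : Transitive P := fun _ _ _ h1 h2 => h1.trans h2
  have hwf' : WellFounded P := hwf.transGen
  have hdec2 : ∀ (k l : W) (x y z : α), rel k x y → rel l x z →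
      ∃ e δ γ, Seq rel y δ e ∧ Seq rel z γ e ∧ Shape P k l δ ∧ Shape P l k γ := by
    intro k l x y z hk hl
    obtain ⟨b₁, b₂, c₁, c₂, d, h1, h2, h3, h4, h5, h6⟩ := hdec k l x y z hk hl
    obtain ⟨δa, hδa, hδaS⟩ := seq_of_unionRel h1
    obtain ⟨δc, hδc, hδcS⟩ := seq_of_unionRel h3
    obtain ⟨γa, hγa, hγaS⟩ := seq_of_unionRel h4
    obtain ⟨γc, hγc, hγcS⟩ := seq_of_unionRel h6
    have hδbE : ∃ δb, Seq rel b₁ δb b₂ ∧ (δb = [] ∨ δb = [l]) := by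
      rcases h2 with rfl | h2
      · exact ⟨[], Seq.nil _, Or.inl rfl⟩
      · exact ⟨[l], Seq.cons h2 (Seq.nil _), Or.inr rfl⟩
    obtain ⟨δb, hδb, hδbS⟩ := hδbE
    have hγbE : ∃ γb, Seq rel c₁ γb c₂ ∧ (γb = [] ∨ γb = [k]) := by
      rcases h5 with rfl | h5
      · exact ⟨[], Seq.nil _, Or.inl rfl⟩
      · exact ⟨[k], Seq.cons h5 (Seq.nil _), Or.inr rfl⟩
    obtain ⟨γb, hγb, hγbS⟩ := hγbE
    refine ⟨d, δa ++ (δb ++ δc), γa ++ (γb ++ γc),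
      hδa.append (hδb.append hδc), hγa.append (hγb.append hγc), ?_, ?_⟩
    · refine ⟨δa, δb, δc, rfl, ?_, hδbS, ?_⟩
      · intro j hj; exact Relation.TransGen.single (hδaS j hj)
      · intro j hj
        rcases hδcS j hj with hj' | hj'
        · exact Or.inl (Relation.TransGen.single hj')
        · exact Or.inr (Relation.TransGen.single hj')
    · refine ⟨γa, γb, γc, rfl, ?_, hγbS, ?_⟩
      · intro j hj; exact Relation.TransGen.single (hγaS j hj)
      · intro j hj
        rcases hγcS j hj with hj' | hj'
        · exact Or.inr (Relation.TransGen.single hj')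
        · exact Or.inl (Relation.TransGen.single hj')
  obtain ⟨σ, hσ⟩ := seq_of_rtg (rel := rel) hab
  obtain ⟨τ, hτ⟩ := seq_of_rtg (rel := rel) hac
  obtain ⟨d, σ', τ', hbd, hcd, -, -⟩ :=
    main_lemma (prec := P) htr hwf' hdec2 (meas P σ + meas P τ) a b c σ τ rfl hσ hτ
  exact ⟨d, rtg_of_seq hbd, rtg_of_seq hcd⟩

end VanOostromDD

/-- Decreasing diagrams (van Oostrom): an abstract rewriting system whose steps
are labelled in a well-founded order and which is decreasing is confluent. -/
theorem decreasing_confluent {α W : Type*} (rel : W → α → α → Prop)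
    (prec : W → W → Prop) (hwf : WellFounded prec)
    (hdec : Decreasing rel prec) :
    ∀ a b c, Relation.ReflTransGen (fun x y => ∃ k, rel k x y) a b →
      Relation.ReflTransGen (fun x y => ∃ k, rel k x y) a c →
      ∃ d, Relation.ReflTransGen (fun x y => ∃ k, rel k x y) b d ∧
        Relation.ReflTransGen (fun x y => ∃ k, rel k x y) c d :=
  VanOostromDD.confluent prec hwf hdec
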